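/- Suppose C(t) is nonempty, closed and convex for every t ∈ [0,T], A₁ = 0, and ⟨f(t), x⟩ = 0 for every t ∈ [0,T] and every x ∈ ker A₀. Then for every u₀ ∈ C(0) the solution set of the sweeping process (P) with initial value u₀ is convex: if u and w are solutions of (P) with initial value u₀ and λ ∈ [0,1], then (1−λ)u + λw is a solution of (P) with initial value u₀. -/

import Mathlib

open MeasureTheory Set
open scoped RealInnerProductSpace

/-- `u` (with Bochner-integrable derivative `v`) is a solution of the sweeping process (P)
with velocity constraint `C`, data `A₀, A₁, f`, and initial value `u₀` on `[0,T]`. -/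
def SweepSol {H : Type*} [NormedAddCommGroup H] [InnerProductSpace ℝ H]
    (T : ℝ) (A₀ A₁ : H →L[ℝ] H) (f : ℝ → H) (C : ℝ → Set H)
    (u₀ : H) (u v : ℝ → H) : Prop :=
  IntegrableOn v (Icc 0 T) ∧
  (∀ t ∈ Icc (0:ℝ) T, u t = u₀ + ∫ τ in (0:ℝ)..t, v τ) ∧
  (∀ᵐ t ∂(volume.restrict (Icc (0:ℝ) T)),
    v t ∈ C t ∧ ∀ z ∈ C t, 0 ≤ ⟪A₁ (v t) + A₀ (u t) - f t, z - v t⟫)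

/-- For a symmetric positive-semidefinite operator, `⟪A x, x⟫ = 0` implies `A x = 0`. -/
lemma psd_apply_eq_zero {H : Type*} [NormedAddCommGroup H] [InnerProductSpace ℝ H]
    (A : H →L[ℝ] H) (hsym : ∀ x y : H, ⟪A x, y⟫ = ⟪x, A y⟫)
    (hpos : ∀ x : H, 0 ≤ ⟪A x, x⟫) {x : H} (hx : ⟪A x, x⟫ = 0) : A x = 0 := by
  by_contra hne
  have hbpos : (0:ℝ) < ‖A x‖ ^ 2 := by
    have := norm_pos_iff.2 hne
    positivity
  set b : ℝ := ‖A x‖ ^ 2 with hb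
  set c : ℝ := ⟪A (A x), A x⟫ with hc
  have hcnn : 0 ≤ c := hpos (A x)
  have key : ∀ r : ℝ, 0 ≤ 2 * r * b + r ^ 2 * c := by
    intro r
    have h0 := hpos (x + r • A x)
    have e : ⟪A (x + r • A x), x + r • A x⟫
        = ⟪A x, x⟫ + r * ⟪A x, A x⟫ + r * ⟪A (A x), x⟫ + r ^ 2 * c := by
      simp only [map_add, _root_.map_smul, inner_add_left, inner_add_right,
        real_inner_smul_left, real_inner_smul_right, hc]
      ring
    have e2 : ⟪A (A x), x⟫ = ⟪A x, A x⟫ := hsym (A x) x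
    have e3 : ⟪A x, A x⟫ = b := real_inner_self_eq_norm_sq (A x)
    rw [e, e2, e3, hx] at h0
    linarith
  have hc1 : (0:ℝ) < c + 1 := by linarith
  have htpos : (0:ℝ) < b / (c + 1) := div_pos hbpos hc1
  set t : ℝ := b / (c + 1) with htd
  have ht : t * (c + 1) = b := div_mul_cancel₀ b (ne_of_gt hc1)
  have hk := key (-t)
  nlinarith [mul_pos htpos htpos, hcnn, hk, ht]

/-- Key monotonicity estimate: if `d` is integrable on `[0,T]`, `A` is symmetric and
`⟪A (∫₀ˢ d), d s⟫ ≤ 0` a.e., then `⟪A (∫₀ᵗ d), ∫₀ᵗ d⟫ ≤ 0` for every `t ∈ [0,T]`. -/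
lemma key_nonpos {H : Type*} [NormedAddCommGroup H] [InnerProductSpace ℝ H] [CompleteSpace H]
    (T : ℝ) (A : H →L[ℝ] H) (hsym : ∀ x y : H, ⟪A x, y⟫ = ⟪x, A y⟫)
    (d : ℝ → H) (hd : IntegrableOn d (Icc 0 T))
    (hneg : ∀ᵐ s ∂(volume.restrict (Icc (0:ℝ) T)), ⟪A (∫ τ in (0:ℝ)..s, d τ), d s⟫ ≤ 0)
    {t : ℝ} (ht : t ∈ Icc (0:ℝ) T) :
    ⟪A (∫ τ in (0:ℝ)..t, d τ), ∫ τ in (0:ℝ)..t, d τ⟫ ≤ 0 := by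
  set μ : Measure ℝ := volume.restrict (Ioc (0:ℝ) t) with hμ
  have hsub : Ioc (0:ℝ) t ⊆ Icc 0 T := fun x hx => ⟨hx.1.le, hx.2.trans ht.2⟩
  have hd' : Integrable d μ := hd.mono_set hsub
  have hAd : Integrable (fun s => A (d s)) μ := A.integrable_comp hd'
  set F : ℝ × ℝ → ℝ := fun p => ⟪A (d p.1), d p.2⟫ with hF
  have hFsymm : ∀ a b : ℝ, F (a, b) = F (b, a) := by
    intro a b
    simp only [hF]
    rw [hsym, real_inner_comm]
  have hdm : AEStronglyMeasurable d μ := hd'.1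
  have hFm : AEStronglyMeasurable F (μ.prod μ) :=
    ((A.continuous.comp_aestronglyMeasurable hdm).comp_fst).inner hdm.comp_snd
  have hFint : Integrable F (μ.prod μ) := by
    have hb : Integrable (fun p : ℝ × ℝ => (‖A‖ * ‖d p.1‖) * ‖d p.2‖) (μ.prod μ) :=
      Integrable.mul_prod (hd'.norm.const_mul ‖A‖) hd'.norm
    refine hb.mono' hFm ?_
    refine Filter.Eventually.of_forall fun p => ?_
    calc ‖F p‖ ≤ ‖A (d p.1)‖ * ‖d p.2‖ := norm_inner_le_norm _ _
      _ ≤ (‖A‖ * ‖d p.1‖) * ‖d p.2‖ :=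
          mul_le_mul_of_nonneg_right (A.le_opNorm _) (norm_nonneg _)
  set S : Set (ℝ × ℝ) := {p : ℝ × ℝ | p.2 ≤ p.1} with hS
  have hSm : MeasurableSet S := measurableSet_le measurable_snd measurable_fst
  have hGint : Integrable (S.indicator F) (μ.prod μ) := hFint.indicator hSm
  have hG'int : Integrable (Sᶜ.indicator F) (μ.prod μ) := hFint.indicator hSm.compl
  -- the diagonal is null
  have hdiag : (μ.prod μ) {z : ℝ × ℝ | z.1 = z.2} = 0 := by
    rw [MeasureTheory.Measure.measure_prod_null
      (measurableSet_eq_fun measurable_fst measurable_snd)]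
    refine Filter.Eventually.of_forall fun x => ?_
    have hpre : (Prod.mk x ⁻¹' {z : ℝ × ℝ | z.1 = z.2}) = {x} := by
      ext y; simp [eq_comm]
    simp only [hpre, Pi.zero_apply]
    rw [hμ, Measure.restrict_apply (measurableSet_singleton x)]
    exact measure_mono_null inter_subset_left (measure_singleton x)
  -- swapping the complement indicator gives the indicator, a.e.
  have hswap : ∫ z, Sᶜ.indicator F z ∂(μ.prod μ) = ∫ z, S.indicator F z ∂(μ.prod μ) := by
    have hae : (fun z : ℝ × ℝ => Sᶜ.indicator F z.swap) =ᵐ[μ.prod μ] S.indicator F := by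
      have hne : ∀ᵐ z ∂(μ.prod μ), z.1 ≠ z.2 := by
        rw [ae_iff]
        convert hdiag using 2
        simp
      filter_upwards [hne] with z hz
      rcases le_or_gt z.2 z.1 with h | h
      · have h1 : z.swap ∈ Sᶜ := by
          simp only [hS, Set.mem_compl_iff, Set.mem_setOf_eq, Prod.snd_swap, Prod.fst_swap]
          exact not_le.2 (lt_of_le_of_ne h (fun e => hz e.symm))
        have h2 : z ∈ S := h
        rw [Set.indicator_of_mem h1 F, Set.indicator_of_mem h2 F]
        have he : F (z.2, z.1) = F (z.1, z.2) := hFsymm z.2 z.1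
        exact he
      · have h1 : z.swap ∉ Sᶜ := by
          simp only [hS, Set.mem_compl_iff, Set.mem_setOf_eq, Prod.snd_swap, Prod.fst_swap,
            not_not]
          exact h.le
        have h2 : z ∉ S := not_le.2 h
        rw [Set.indicator_of_notMem h1 F, Set.indicator_of_notMem h2 F]
    calc ∫ z, Sᶜ.indicator F z ∂(μ.prod μ)
        = ∫ z : ℝ × ℝ, Sᶜ.indicator F z.swap ∂(μ.prod μ) := (integral_prod_swap _).symm
      _ = ∫ z, S.indicator F z ∂(μ.prod μ) := integral_congr_ae hae
  -- split `F` into the two triangles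
  have hsplit : ∫ z, F z ∂(μ.prod μ) = 2 * ∫ z, S.indicator F z ∂(μ.prod μ) := by
    have h1 : ∫ z, F z ∂(μ.prod μ)
        = ∫ z, S.indicator F z ∂(μ.prod μ) + ∫ z, Sᶜ.indicator F z ∂(μ.prod μ) := by
      rw [← integral_add hGint hG'int]
      refine integral_congr_ae (Filter.Eventually.of_forall fun z => ?_)
      have := congrFun (S.indicator_self_add_compl F) z
      simpa [Pi.add_apply] using this.symm
    rw [h1, hswap]; ring
  -- the quadratic form as a double integral
  have hUt : (∫ τ in (0:ℝ)..t, d τ) = ∫ r, d r ∂μ := intervalIntegral.integral_of_le ht.1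
  have q1 : ⟪A (∫ τ in (0:ℝ)..t, d τ), ∫ τ in (0:ℝ)..t, d τ⟫
      = ∫ s, ∫ r, F (s, r) ∂μ ∂μ := by
    rw [hUt]
    calc ⟪A (∫ r, d r ∂μ), ∫ r, d r ∂μ⟫
        = ⟪∫ s, A (d s) ∂μ, ∫ r, d r ∂μ⟫ := by
          rw [ContinuousLinearMap.integral_comp_comm A hd']
      _ = ∫ s, ⟪A (d s), ∫ r, d r ∂μ⟫ ∂μ := by
          rw [real_inner_comm, ← integral_inner hAd]
          exact integral_congr_ae (Filter.Eventually.of_forall fun s => real_inner_comm _ _)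
      _ = ∫ s, ∫ r, F (s, r) ∂μ ∂μ := by
          refine integral_congr_ae (Filter.Eventually.of_forall fun s => ?_)
          exact (integral_inner hd' (A (d s))).symm
  have q2 : ∫ s, ∫ r, F (s, r) ∂μ ∂μ = ∫ z, F z ∂(μ.prod μ) := by
    have hun : Integrable (Function.uncurry fun s r => F (s, r)) (μ.prod μ) := by
      exact hFint
    simpa using integral_integral hun
  -- the triangle integral as the integral of the a.e. nonpositive function
  have q3 : ∫ z, S.indicator F z ∂(μ.prod μ)
      = ∫ s, ∫ r, S.indicator F (s, r) ∂μ ∂μ := by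
    have hun : Integrable (Function.uncurry fun s r => S.indicator F (s, r)) (μ.prod μ) := by
      exact hGint
    simpa using (integral_integral hun).symm
  have q4 : ∫ s, ∫ r, S.indicator F (s, r) ∂μ ∂μ
      = ∫ s, ⟪A (∫ τ in (0:ℝ)..s, d τ), d s⟫ ∂μ := by
    refine integral_congr_ae ?_
    filter_upwards [ae_restrict_mem measurableSet_Ioc] with s hs
    have hds : IntegrableOn d (Ioc 0 s) :=
      hd.mono_set (fun x hx => ⟨hx.1.le, hx.2.trans (hs.2.trans ht.2)⟩)
    have hUs : (∫ τ in (0:ℝ)..s, d τ) = ∫ r in Ioc 0 s, d r :=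
      intervalIntegral.integral_of_le hs.1.le
    have hres : μ.restrict (Iic s) = volume.restrict (Ioc 0 s) := by
      rw [hμ, Measure.restrict_restrict measurableSet_Iic]
      congr 1
      ext x
      simp only [mem_inter_iff, mem_Iic, mem_Ioc]
      constructor
      · rintro ⟨h1, h2, _⟩; exact ⟨h2, h1⟩
      · rintro ⟨h1, h2⟩; exact ⟨h2, h1, h2.trans hs.2⟩
    calc ∫ r, S.indicator F (s, r) ∂μ
        = ∫ r, (Iic s).indicator (fun r => F (s, r)) r ∂μ := by
          refine integral_congr_ae (Filter.Eventually.of_forall fun r => ?_)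
          simp only [Set.indicator_apply, hS, Set.mem_setOf_eq, Set.mem_Iic]
      _ = ∫ r in Iic s, F (s, r) ∂μ := integral_indicator measurableSet_Iic
      _ = ∫ r in Ioc 0 s, F (s, r) := by rw [hres]
      _ = ⟪A (∫ τ in (0:ℝ)..s, d τ), d s⟫ := by
          rw [hUs]
          calc ∫ r in Ioc 0 s, F (s, r)
              = ∫ r in Ioc 0 s, ⟪d s, A (d r)⟫ := by
                refine integral_congr_ae (Filter.Eventually.of_forall fun r => ?_)
                exact hsym (d s) (d r)
            _ = ⟪d s, ∫ r in Ioc 0 s, A (d r)⟫ := integral_inner (A.integrable_comp hds) (d s)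
            _ = ⟪d s, A (∫ r in Ioc 0 s, d r)⟫ := by
                rw [ContinuousLinearMap.integral_comp_comm A hds]
            _ = ⟪A (∫ r in Ioc 0 s, d r), d s⟫ := real_inner_comm _ _
  have q5 : ∫ s, ⟪A (∫ τ in (0:ℝ)..s, d τ), d s⟫ ∂μ ≤ 0 :=
    integral_nonpos_of_ae (ae_restrict_of_ae_restrict_of_subset hsub hneg)
  calc ⟪A (∫ τ in (0:ℝ)..t, d τ), ∫ τ in (0:ℝ)..t, d τ⟫
      = ∫ z, F z ∂(μ.prod μ) := q1.trans q2
    _ = 2 * ∫ z, S.indicator F z ∂(μ.prod μ) := hsplit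
    _ = 2 * ∫ s, ⟪A (∫ τ in (0:ℝ)..s, d τ), d s⟫ ∂μ := by rw [q3, q4]
    _ ≤ 0 := by linarith

theorem solution_set_convex_of_A1_eq_zero_f_perp_ker
    {H : Type*} [NormedAddCommGroup H] [InnerProductSpace ℝ H] [CompleteSpace H]
    (T : ℝ) (hT : 0 < T) (A₀ A₁ : H →L[ℝ] H)
    (hA₀sym : ∀ x y : H, ⟪A₀ x, y⟫ = ⟪x, A₀ y⟫)
    (hA₀pos : ∀ x : H, 0 ≤ ⟪A₀ x, x⟫)
    (hA₁ : A₁ = 0)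
    (f : ℝ → H) (hf : ContinuousOn f (Icc 0 T))
    (hperp : ∀ t ∈ Icc (0:ℝ) T, ∀ x : H, A₀ x = 0 → ⟪f t, x⟫ = 0)
    (C : ℝ → Set H)
    (hC : ∀ t ∈ Icc (0:ℝ) T, (C t).Nonempty ∧ IsClosed (C t) ∧ Convex ℝ (C t))
    (u₀ : H) (hu₀ : u₀ ∈ C 0)
    (u w vu vw : ℝ → H)
    (hu : SweepSol T A₀ A₁ f C u₀ u vu)
    (hw : SweepSol T A₀ A₁ f C u₀ w vw)
    (lam : ℝ) (hlam : lam ∈ Icc (0:ℝ) 1) :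
    ∃ v : ℝ → H,
      SweepSol T A₀ A₁ f C u₀ (fun t => (1 - lam) • u t + lam • w t) v := by
  obtain ⟨hvu_int, hu_repr, hu_ae⟩ := hu
  obtain ⟨hvw_int, hw_repr, hw_ae⟩ := hw
  set d : ℝ → H := fun s => vu s - vw s with hd_def
  have hd_int : IntegrableOn d (Icc 0 T) := hvu_int.sub hvw_int
  have hIIu : ∀ s ∈ Icc (0:ℝ) T, IntervalIntegrable vu volume 0 s := fun s hs =>
    (intervalIntegrable_iff_integrableOn_Ioc_of_le hs.1).mpr
      (hvu_int.mono_set (fun x hx => ⟨hx.1.le, hx.2.trans hs.2⟩))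
  have hIIw : ∀ s ∈ Icc (0:ℝ) T, IntervalIntegrable vw volume 0 s := fun s hs =>
    (intervalIntegrable_iff_integrableOn_Ioc_of_le hs.1).mpr
      (hvw_int.mono_set (fun x hx => ⟨hx.1.le, hx.2.trans hs.2⟩))
  have hUsub : ∀ s ∈ Icc (0:ℝ) T, (∫ τ in (0:ℝ)..s, d τ) = u s - w s := by
    intro s hs
    rw [show (∫ τ in (0:ℝ)..s, d τ) = ∫ τ in (0:ℝ)..s, (vu τ - vw τ) from rfl,
      intervalIntegral.integral_sub (hIIu s hs) (hIIw s hs), hu_repr s hs, hw_repr s hs]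
    abel
  have hneg : ∀ᵐ s ∂(volume.restrict (Icc (0:ℝ) T)),
      ⟪A₀ (∫ τ in (0:ℝ)..s, d τ), d s⟫ ≤ 0 := by
    filter_upwards [hu_ae, hw_ae, ae_restrict_mem measurableSet_Icc] with s h1 h2 hs
    rw [hUsub s hs]
    have i1 := h1.2 (vw s) h2.1
    have i2 := h2.2 (vu s) h1.1
    simp only [hA₁, ContinuousLinearMap.zero_apply, zero_add] at i1 i2
    show ⟪A₀ (u s - w s), vu s - vw s⟫ ≤ 0
    simp only [map_sub, inner_sub_left, inner_sub_right] at i1 i2 ⊢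
    linarith
  have hAzero : ∀ s ∈ Icc (0:ℝ) T, A₀ (u s) = A₀ (w s) := by
    intro s hs
    have h0 := key_nonpos T A₀ hA₀sym d hd_int hneg hs
    have h1 : ⟪A₀ (∫ τ in (0:ℝ)..s, d τ), ∫ τ in (0:ℝ)..s, d τ⟫ = 0 :=
      le_antisymm h0 (hA₀pos _)
    have h2 := psd_apply_eq_zero A₀ hA₀sym hA₀pos h1
    rw [hUsub s hs, map_sub] at h2
    exact sub_eq_zero.mp h2
  refine ⟨fun s => (1 - lam) • vu s + lam • vw s, ?_, ?_, ?_⟩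
  · exact ((hvu_int.smul ((1:ℝ) - lam)).add (hvw_int.smul lam))
  · intro s hs
    show (1 - lam) • u s + lam • w s
        = u₀ + ∫ τ in (0:ℝ)..s, ((1 - lam) • vu τ + lam • vw τ)
    have hsu : IntervalIntegrable (fun τ => (1 - lam) • vu τ) volume 0 s := by
      simpa [Pi.smul_def] using (hIIu s hs).smul ((1:ℝ) - lam)
    have hsw : IntervalIntegrable (fun τ => lam • vw τ) volume 0 s := by
      simpa [Pi.smul_def] using (hIIw s hs).smul lam
    rw [hu_repr s hs, hw_repr s hs, intervalIntegral.integral_add hsu hsw,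
      intervalIntegral.integral_smul, intervalIntegral.integral_smul]
    module
  · filter_upwards [hu_ae, hw_ae, ae_restrict_mem measurableSet_Icc] with s h1 h2 hs
    obtain ⟨-, -, hconv⟩ := hC s hs
    have hAeq := hAzero s hs
    constructor
    · exact hconv h1.1 h2.1 (by linarith [hlam.2]) hlam.1 (by ring)
    · intro z hz
      have i1 := h1.2 z hz
      have i2 := h2.2 z hz
      simp only [hA₁, ContinuousLinearMap.zero_apply, zero_add] at i1 i2 ⊢
      have hkey : A₀ ((1 - lam) • u s + lam • w s) = A₀ (u s) := by
        rw [map_add, _root_.map_smul, _root_.map_smul, hAeq]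
        module
      rw [hkey]
      have hz2 : z - ((1 - lam) • vu s + lam • vw s)
          = (1 - lam) • (z - vu s) + lam • (z - vw s) := by module
      rw [hz2, inner_add_right, real_inner_smul_right, real_inner_smul_right]
      have i2' : 0 ≤ ⟪A₀ (u s) - f s, z - vw s⟫ := by rw [hAeq]; exact i2
      exact add_nonneg (mul_nonneg (by linarith [hlam.2]) i1) (mul_nonneg hlam.1 i2')
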